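/- Assume G_r has min edge-support index 1 and max edge-support index r (i.e., some edge contains 1 and some edge has endpoint r), the sparsity index equals 1 (some edge (v-1, v) ∈ E(G_r)), and hence there are edges (1, a), (v-1, v), (b, r) in G_r with 2 ≤ a, v ≤ r and 1 ≤ b ≤ r - 1. Then for all n ≥ 4r, every vertex k with 2r ≤ k ≤ n - 2r is adjacent in G_n to every other vertex of G_n; equivalently, U_n = {2r, 2r+1, ..., n-2r} consists of isolated vertices of the complement graph G_n^c. -/
import Mathlib


/-- `(k,l)` lies in the triangle `Δ((i,j), n-r)` for some edge `(i,j) ∈ E` of `G_r`,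
i.e. `0 ≤ k - i ≤ l - j ≤ n - r` (written additively). -/
def triRel (E : Set (ℕ × ℕ)) (r n k l : ℕ) : Prop :=
  ∃ q ∈ E, q.1 ≤ k ∧ k + q.2 ≤ l + q.1 ∧ l + r ≤ n + q.2

/-- The graph `G_n` of the invariant chain determined by the edge set `E` of `G_r`:
`(k,l)` with `k < l` is an edge of `G_n` iff `(k,l) ∈ Δ((i,j), n-r)` for some `(i,j) ∈ E`. -/
def chainGraph (E : Set (ℕ × ℕ)) (r n : ℕ) : SimpleGraph ℕ :=
  SimpleGraph.fromRel (triRel E r n)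

/-- `E` is a set of edges `(i,j)` of a graph `G_r` on `{1,…,r}` with `i < j`. -/
def goodEdges (E : Set (ℕ × ℕ)) (r : ℕ) : Prop :=
  ∀ q ∈ E, 1 ≤ q.1 ∧ q.1 < q.2 ∧ q.2 ≤ r

/-- Assume `G_r` has edges `(1,a)`, `(v,v+1)` (sparsity index 1) and `(b,r)`.
Then for all `n ≥ 4r`, every vertex `u` with `2r ≤ u ≤ n - 2r` is adjacent in `G_n`
to every other vertex of `{1,…,n}`; equivalently `U_n = {2r,…,n-2r}` consists of
isolated vertices of the complement graph `G_n^c`. -/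
theorem middle_vertices_dominating (E : Set (ℕ × ℕ)) (r a v b : ℕ) (hE : goodEdges E r)
    (ha : (1, a) ∈ E) (hv : (v, v + 1) ∈ E) (hb : (b, r) ∈ E) :
    ∀ n, 4 * r ≤ n → ∀ u, 2 * r ≤ u → u ≤ n - 2 * r →
      ∀ l ∈ Set.Icc 1 n, l ≠ u → (chainGraph E r n).Adj u l := by
  intro n hn u hu1 hu2 l hl hlu
  obtain ⟨hl1, hln⟩ := hl
  obtain ⟨ha1, ha2, ha3⟩ := hE _ ha
  obtain ⟨hv1, hv2, hv3⟩ := hE _ hv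
  obtain ⟨hb1, hb2, hb3⟩ := hE _ hb
  have hun : u + 2 * r ≤ n := by omega
  rw [chainGraph, SimpleGraph.fromRel_adj]
  refine ⟨Ne.symm hlu, ?_⟩
  rcases lt_or_gt_of_ne (Ne.symm hlu) with h | h
  · by_cases hc : u + r ≤ l + b
    · exact Or.inl ⟨(b, r), hb, by omega, by omega, by omega⟩
    · exact Or.inl ⟨(v, v + 1), hv, by omega, by omega, by omega⟩
  · by_cases hc : l ≤ r
    · exact Or.inr ⟨(1, a), ha, by omega, by omega, by omega⟩
    · exact Or.inr ⟨(v, v + 1), hv, by omega, by omega, by omega⟩
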